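/- In BH_2, let s_1=(1,0), s_2=(3,0), s_3=(1,2), t_1=(0,0), t_2=(2,0), t_3=(0,1). Then there do NOT exist three pairwise vertex-disjoint paths P_j from s_j to t_j (j=1,2,3) whose vertex sets together cover all 16 vertices of BH_2. Hence BH_2 does not admit a paired 3-disjoint path cover for all choices of sources and sinks. -/

import Mathlib

open SimpleGraph

/-- One step of the balanced-hypercube adjacency relation. -/
def bhRel (n : ℕ) (u v : Fin n → ZMod 4) : Prop :=
  ∃ (hn : 0 < n) (s : ZMod 4), (s = 1 ∨ s = -1) ∧
    (v = Function.update u ⟨0, hn⟩ (u ⟨0, hn⟩ + s) ∨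
      ∃ i : Fin n, i ≠ ⟨0, hn⟩ ∧
        v = Function.update (Function.update u ⟨0, hn⟩ (u ⟨0, hn⟩ + s)) i
              (u i + (if Even (u ⟨0, hn⟩).val then 1 else -1)))

/-- The balanced hypercube `BH n` on vertex set `{0,1,2,3}^n`. -/
def BH (n : ℕ) : SimpleGraph (Fin n → ZMod 4) :=
  SimpleGraph.fromRel (bhRel n)

/-- A vertex is white if its inner index is even. -/
def IsWhite {n : ℕ} (hn : 0 < n) (u : Fin n → ZMod 4) : Prop :=
  Even (u ⟨0, hn⟩).val

/-- A vertex is black if its inner index is odd. -/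
def IsBlack {n : ℕ} (hn : 0 < n) (u : Fin n → ZMod 4) : Prop :=
  Odd (u ⟨0, hn⟩).val

/-- The vertex `(a, b)` of `BH 2`. -/
def vtx (a b : ZMod 4) : Fin 2 → ZMod 4 := ![a, b]

/-! ### Auxiliary machinery: we encode vertices as naturals below 16 and run a
verified exhaustive search for a paired 3-disjoint path cover. -/

instance decBhRel (u v : Fin 2 → ZMod 4) : Decidable (bhRel 2 u v) := by
  unfold bhRel; infer_instance

instance decBHAdj : DecidableRel (BH 2).Adj := fun u v =>
  decidable_of_iff (u ≠ v ∧ (bhRel 2 u v ∨ bhRel 2 v u)) (by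
    rw [BH]; exact (SimpleGraph.fromRel_adj _ u v).symm)

/-- Encoding of a vertex of `BH 2` as a natural number below 16. -/
def enc (u : Fin 2 → ZMod 4) : Nat := (u 0).val + 4 * (u 1).val

/-- The four neighbours of an encoded vertex. -/
def nbA (n : Nat) : Nat := (n % 4 + 1) % 4 + 4 * (n / 4)
def nbB (n : Nat) : Nat := (n % 4 + 3) % 4 + 4 * (n / 4)
def nbC (n : Nat) : Nat :=
  (n % 4 + 1) % 4 + 4 * ((n / 4 + (if n % 2 = 0 then 1 else 3)) % 4)
def nbD (n : Nat) : Nat :=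
  (n % 4 + 3) % 4 + 4 * ((n / 4 + (if n % 2 = 0 then 1 else 3)) % 4)

/-- Encoded neighbour list. -/
def nbrsN (n : Nat) : List Nat := [nbA n, nbB n, nbC n, nbD n]

/-- Encoded adjacency. -/
def adjN (a b : Nat) : Prop := b ∈ nbrsN a

lemma enc_injective : Function.Injective enc := by
  have h : ∀ u v : Fin 2 → ZMod 4, enc u = enc v → u = v := by decide
  exact fun u v huv => h u v huv

lemma adj_enc : ∀ u v : Fin 2 → ZMod 4, (BH 2).Adj u v → enc v ∈ nbrsN (enc u) := by decide

/-- The bitmask of a list of vertices. -/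
def maskOf : List Nat → Nat
  | [] => 0
  | x :: xs => maskOf xs ||| 2 ^ x

lemma maskOf_testBit (V : List Nat) (x : Nat) : (maskOf V).testBit x = decide (x ∈ V) := by
  induction V with
  | nil => simp [maskOf]
  | cons y V ih =>
    simp only [maskOf, Nat.testBit_or, ih, Nat.testBit_two_pow, List.mem_cons]
    by_cases h : x = y <;> by_cases h' : x ∈ V <;> simp [h, h', eq_comm]

lemma maskOf_div (V : List Nat) (x : Nat) :
    maskOf V / 2 ^ x % 2 = if x ∈ V then 1 else 0 := by
  have h := maskOf_testBit V x
  rw [Nat.testBit_eq_decide_div_mod_eq] at h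
  have h2 : maskOf V / 2 ^ x % 2 < 2 := Nat.mod_lt _ (by norm_num)
  by_cases hx : x ∈ V
  · simp only [hx, decide_true, decide_eq_true_eq] at h
    simp [hx, h]
  · simp only [hx, decide_false, decide_eq_false_iff_not] at h
    simp only [hx, if_false]
    omega

lemma mask_zero {V : List Nat} {w : Nat} (h : w ∉ V) : maskOf V / 2 ^ w % 2 = 0 := by
  rw [maskOf_div, if_neg h]

/-- The three-phase exhaustive search.  Phase `j` searches for the `(j+1)`-st path;
the targets are `0`, `2`, `4`, the sources of the later phases are `3` and `9`, and at
the very end we check that all `16` vertices have been covered. -/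
def dfs3 (fuel : Nat) : Nat → Nat → Nat → Nat → Bool :=
  Nat.rec (motive := fun _ => Nat → Nat → Nat → Nat → Bool)
    (fun _ _ _ _ => false)
    (fun _ ih phase visited cnt cur =>
      if cur = (if phase = 0 then 0 else if phase = 1 then 2 else 4) then
        (if phase = 0 then visited / 2^3 % 2 == 0 && ih 1 (visited ||| 2^cur) (cnt+1) 3
         else if phase = 1 then visited / 2^9 % 2 == 0 && ih 2 (visited ||| 2^cur) (cnt+1) 9
         else cnt+1 == 16)
      else
        (visited / 2^(nbA cur) % 2 == 0 && ih phase (visited ||| 2^cur) (cnt+1) (nbA cur)) ||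
        ((visited / 2^(nbB cur) % 2 == 0 && ih phase (visited ||| 2^cur) (cnt+1) (nbB cur)) ||
        ((visited / 2^(nbC cur) % 2 == 0 && ih phase (visited ||| 2^cur) (cnt+1) (nbC cur)) ||
        (visited / 2^(nbD cur) % 2 == 0 && ih phase (visited ||| 2^cur) (cnt+1) (nbD cur)))))
    fuel

def searchBH : Bool := dfs3 64 0 0 0 1

set_option maxHeartbeats 10000000 in
lemma searchBH_eq_false : searchBH = false := by decide

lemma dfs3_succ2 (n visited cnt cur : Nat) :
    dfs3 (n+1) 2 visited cnt cur =
      if cur = 4 then cnt+1 == 16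
      else
        (visited / 2^(nbA cur) % 2 == 0 && dfs3 n 2 (visited ||| 2^cur) (cnt+1) (nbA cur)) ||
        ((visited / 2^(nbB cur) % 2 == 0 && dfs3 n 2 (visited ||| 2^cur) (cnt+1) (nbB cur)) ||
        ((visited / 2^(nbC cur) % 2 == 0 && dfs3 n 2 (visited ||| 2^cur) (cnt+1) (nbC cur)) ||
        (visited / 2^(nbD cur) % 2 == 0 && dfs3 n 2 (visited ||| 2^cur) (cnt+1) (nbD cur)))) := rfl

lemma dfs3_succ1 (n visited cnt cur : Nat) :
    dfs3 (n+1) 1 visited cnt cur =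
      if cur = 2 then
        visited / 2^9 % 2 == 0 && dfs3 n 2 (visited ||| 2^cur) (cnt+1) 9
      else
        (visited / 2^(nbA cur) % 2 == 0 && dfs3 n 1 (visited ||| 2^cur) (cnt+1) (nbA cur)) ||
        ((visited / 2^(nbB cur) % 2 == 0 && dfs3 n 1 (visited ||| 2^cur) (cnt+1) (nbB cur)) ||
        ((visited / 2^(nbC cur) % 2 == 0 && dfs3 n 1 (visited ||| 2^cur) (cnt+1) (nbC cur)) ||
        (visited / 2^(nbD cur) % 2 == 0 && dfs3 n 1 (visited ||| 2^cur) (cnt+1) (nbD cur)))) := rfl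

lemma dfs3_succ0 (n visited cnt cur : Nat) :
    dfs3 (n+1) 0 visited cnt cur =
      if cur = 0 then
        visited / 2^3 % 2 == 0 && dfs3 n 1 (visited ||| 2^cur) (cnt+1) 3
      else
        (visited / 2^(nbA cur) % 2 == 0 && dfs3 n 0 (visited ||| 2^cur) (cnt+1) (nbA cur)) ||
        ((visited / 2^(nbB cur) % 2 == 0 && dfs3 n 0 (visited ||| 2^cur) (cnt+1) (nbB cur)) ||
        ((visited / 2^(nbC cur) % 2 == 0 && dfs3 n 0 (visited ||| 2^cur) (cnt+1) (nbC cur)) ||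
        (visited / 2^(nbD cur) % 2 == 0 && dfs3 n 0 (visited ||| 2^cur) (cnt+1) (nbD cur)))) := rfl

lemma mem_of_getLast?' {α : Type*} {l : List α} {a : α} (h : l.getLast? = some a) : a ∈ l := by
  cases l with
  | nil => simp at h
  | cons b t =>
    rw [List.getLast?_eq_getLast (by simp)] at h
    injection h with h
    exact h ▸ List.getLast_mem _

lemma mem_of_head?' {α : Type*} {l : List α} {a : α} (h : l.head? = some a) : a ∈ l := by
  cases l with
  | nil => simp at h
  | cons b t => simp_all

/-- If `cur ≠ tgt` and the path continues with `w`, the corresponding disjunct of the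
search succeeds. -/
lemma step_or {vis : Nat} {cur w : Nat} (hw : w ∈ nbrsN cur)
    (hmem : vis / 2 ^ w % 2 = 0) (f : Nat → Bool)
    (hf : f w = true) :
    ((vis / 2^(nbA cur) % 2 == 0 && f (nbA cur)) ||
     ((vis / 2^(nbB cur) % 2 == 0 && f (nbB cur)) ||
     ((vis / 2^(nbC cur) % 2 == 0 && f (nbC cur)) ||
     (vis / 2^(nbD cur) % 2 == 0 && f (nbD cur))))) = true := by
  simp only [nbrsN, List.mem_cons, List.not_mem_nil, or_false] at hw
  simp only [Bool.or_eq_true, Bool.and_eq_true, beq_iff_eq]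
  rcases hw with rfl | rfl | rfl | rfl
  · exact Or.inl ⟨hmem, hf⟩
  · exact Or.inr (Or.inl ⟨hmem, hf⟩)
  · exact Or.inr (Or.inr (Or.inl ⟨hmem, hf⟩))
  · exact Or.inr (Or.inr (Or.inr ⟨hmem, hf⟩))

/-- Completeness of phase 2 of the search. -/
lemma dfs3_complete2 :
    ∀ (fuel : Nat) (p V : List Nat) (cur : Nat),
      p.Chain' adjN → p.head? = some cur → p.getLast? = some 4 →
      p.Nodup → (∀ x ∈ p, x ∉ V) → p.length ≤ fuel →
      p.length + V.length = 16 →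
      dfs3 fuel 2 (maskOf V) V.length cur = true := by
  intro fuel
  induction fuel with
  | zero =>
    intro p V cur _ hhead _ _ _ hlen _
    cases p with
    | nil => simp at hhead
    | cons a rest => simp at hlen
  | succ fuel ih =>
    intro p V cur hchain hhead hlast hnodup hdisj hlen hsum
    cases p with
    | nil => simp at hhead
    | cons a rest =>
      have ha : cur = a := by simpa [eq_comm] using hhead
      subst ha
      cases rest with
      | nil =>
        have htgt : cur = 4 := by simpa using hlast
        rw [dfs3_succ2, if_pos htgt]
        have hv : V.length + 1 = 16 := by simp at hsum; omega
        simp [hv]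
      | cons w rest' =>
        rw [List.getLast?_cons_cons] at hlast
        have hne : cur ≠ 4 := by
          intro h; subst h
          exact (List.nodup_cons.mp hnodup).1 (mem_of_getLast?' hlast)
        rw [dfs3_succ2, if_neg hne]
        refine step_or ((List.isChain_cons.mp hchain).1 w rfl)
          (mask_zero (hdisj w (by simp)))
          (fun w' => dfs3 fuel 2 (maskOf V ||| 2^cur) (V.length+1) w') ?_
        have hkey := ih (w :: rest') (cur :: V) w
          (List.IsChain.tail hchain) rfl hlast (List.nodup_cons.mp hnodup).2
          (fun x hx => by
            simp only [List.mem_cons, not_or]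
            exact ⟨fun h => (List.nodup_cons.mp hnodup).1 (h ▸ hx),
              hdisj x (List.mem_cons_of_mem _ hx)⟩)
          (by simpa using hlen)
          (by simp at hsum ⊢; omega)
        exact hkey

/-- Completeness of phase 1 of the search. -/
lemma dfs3_complete1 (q : List Nat) (hqc : q.Chain' adjN) (hqh : q.head? = some 9)
    (hql : q.getLast? = some 4) (hqn : q.Nodup) :
    ∀ (fuel : Nat) (p V : List Nat) (cur : Nat),
      p.Chain' adjN → p.head? = some cur → p.getLast? = some 2 →
      p.Nodup → (∀ x ∈ p, x ∉ V) →
      (∀ x ∈ q, x ∉ V ∧ x ∉ p) →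
      p.length + q.length ≤ fuel →
      p.length + q.length + V.length = 16 →
      dfs3 fuel 1 (maskOf V) V.length cur = true := by
  intro fuel
  induction fuel with
  | zero =>
    intro p V cur _ hhead _ _ _ _ hlen _
    cases p with
    | nil => simp at hhead
    | cons a rest => simp at hlen
  | succ fuel ih =>
    intro p V cur hchain hhead hlast hnodup hdisj hq hlen hsum
    cases p with
    | nil => simp at hhead
    | cons a rest =>
      have ha : cur = a := by simpa [eq_comm] using hhead
      subst ha
      cases rest with
      | nil =>
        have htgt : cur = 2 := by simpa using hlast
        subst htgt
        rw [dfs3_succ1, if_pos rfl, Bool.and_eq_true]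
        constructor
        · have h9 : (9 : Nat) ∉ V := (hq 9 (mem_of_head?' hqh)).1
          have hmz := mask_zero h9
          norm_num at hmz
          simp [hmz]
        · have hkey := dfs3_complete2 fuel q (2 :: V) 9 hqc hqh hql hqn
            (fun x hx => by
              have := hq x hx
              simp only [List.mem_cons, not_or]
              exact ⟨fun h => this.2 (by simp [h]), this.1⟩)
            (by simp at hlen; omega)
            (by simp at hsum ⊢; omega)
          exact hkey
      | cons w rest' =>
        rw [List.getLast?_cons_cons] at hlast
        have hne : cur ≠ 2 := by
          intro h; subst h
          exact (List.nodup_cons.mp hnodup).1 (mem_of_getLast?' hlast)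
        rw [dfs3_succ1, if_neg hne]
        refine step_or ((List.isChain_cons.mp hchain).1 w rfl)
          (mask_zero (hdisj w (by simp)))
          (fun w' => dfs3 fuel 1 (maskOf V ||| 2^cur) (V.length+1) w') ?_
        have hkey := ih (w :: rest') (cur :: V) w
          (List.IsChain.tail hchain) rfl hlast (List.nodup_cons.mp hnodup).2
          (fun x hx => by
            simp only [List.mem_cons, not_or]
            exact ⟨fun h => (List.nodup_cons.mp hnodup).1 (h ▸ hx),
              hdisj x (List.mem_cons_of_mem _ hx)⟩)
          (fun x hx => by
            have := hq x hx
            simp only [List.mem_cons, not_or] at this ⊢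
            obtain ⟨h1, h2, h3, h4⟩ := this
            exact ⟨⟨h2, h1⟩, h3, h4⟩)
          (by simp at hlen ⊢; omega)
          (by simp at hsum ⊢; omega)
        exact hkey

/-- Completeness of phase 0 of the search. -/
lemma dfs3_complete0 (q r : List Nat)
    (hqc : q.Chain' adjN) (hqh : q.head? = some 3) (hql : q.getLast? = some 2) (hqn : q.Nodup)
    (hrc : r.Chain' adjN) (hrh : r.head? = some 9) (hrl : r.getLast? = some 4) (hrn : r.Nodup)
    (hqr : ∀ x ∈ r, x ∉ q) :
    ∀ (fuel : Nat) (p V : List Nat) (cur : Nat),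
      p.Chain' adjN → p.head? = some cur → p.getLast? = some 0 →
      p.Nodup → (∀ x ∈ p, x ∉ V) →
      (∀ x ∈ q, x ∉ V ∧ x ∉ p) →
      (∀ x ∈ r, x ∉ V ∧ x ∉ p) →
      p.length + q.length + r.length ≤ fuel →
      p.length + q.length + r.length + V.length = 16 →
      dfs3 fuel 0 (maskOf V) V.length cur = true := by
  intro fuel
  induction fuel with
  | zero =>
    intro p V cur _ hhead _ _ _ _ _ hlen _
    cases p with
    | nil => simp at hhead
    | cons a rest => simp at hlen
  | succ fuel ih =>
    intro p V cur hchain hhead hlast hnodup hdisj hq hr hlen hsum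
    cases p with
    | nil => simp at hhead
    | cons a rest =>
      have ha : cur = a := by simpa [eq_comm] using hhead
      subst ha
      cases rest with
      | nil =>
        have htgt : cur = 0 := by simpa using hlast
        subst htgt
        rw [dfs3_succ0, if_pos rfl, Bool.and_eq_true]
        constructor
        · have h3 : (3 : Nat) ∉ V := (hq 3 (mem_of_head?' hqh)).1
          have hmz := mask_zero h3
          norm_num at hmz
          simp [hmz]
        · have hkey := dfs3_complete1 r hrc hrh hrl hrn fuel q (0 :: V) 3
            hqc hqh hql hqn
            (fun x hx => by
              have := hq x hx
              simp only [List.mem_cons, not_or]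
              exact ⟨fun h => this.2 (by simp [h]), this.1⟩)
            (fun x hx => by
              have h1 := hr x hx
              refine ⟨?_, hqr x hx⟩
              simp only [List.mem_cons, not_or]
              exact ⟨fun h => h1.2 (by simp [h]), h1.1⟩)
            (by simp at hlen; omega)
            (by simp at hsum ⊢; omega)
          exact hkey
      | cons w rest' =>
        rw [List.getLast?_cons_cons] at hlast
        have hne : cur ≠ 0 := by
          intro h; subst h
          exact (List.nodup_cons.mp hnodup).1 (mem_of_getLast?' hlast)
        rw [dfs3_succ0, if_neg hne]
        refine step_or ((List.isChain_cons.mp hchain).1 w rfl)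
          (mask_zero (hdisj w (by simp)))
          (fun w' => dfs3 fuel 0 (maskOf V ||| 2^cur) (V.length+1) w') ?_
        have hkey := ih (w :: rest') (cur :: V) w
          (List.IsChain.tail hchain) rfl hlast (List.nodup_cons.mp hnodup).2
          (fun x hx => by
            simp only [List.mem_cons, not_or]
            exact ⟨fun h => (List.nodup_cons.mp hnodup).1 (h ▸ hx),
              hdisj x (List.mem_cons_of_mem _ hx)⟩)
          (fun x hx => by
            have := hq x hx
            simp only [List.mem_cons, not_or] at this ⊢
            obtain ⟨h1, h2, h3, h4⟩ := this
            exact ⟨⟨h2, h1⟩, h3, h4⟩)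
          (fun x hx => by
            have := hr x hx
            simp only [List.mem_cons, not_or] at this ⊢
            obtain ⟨h1, h2, h3, h4⟩ := this
            exact ⟨⟨h2, h1⟩, h3, h4⟩)
          (by simp at hlen ⊢; omega)
          (by simp at hsum ⊢; omega)
        exact hkey

lemma card16 : Fintype.card (Fin 2 → ZMod 4) = 16 := by simp

/-- For `s1=(1,0)`, `s2=(3,0)`, `s3=(1,2)`, `t1=(0,0)`, `t2=(2,0)`, `t3=(0,1)`,
`BH 2` has no paired 3-disjoint path cover joining `s_j` to `t_j`. -/
theorem BH_two_no_three_DPC :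
    ¬ ∃ (p1 : (BH 2).Walk (vtx 1 0) (vtx 0 0)) (p2 : (BH 2).Walk (vtx 3 0) (vtx 2 0))
        (p3 : (BH 2).Walk (vtx 1 2) (vtx 0 1)),
      p1.IsPath ∧ p2.IsPath ∧ p3.IsPath ∧
      p1.support.Disjoint p2.support ∧ p1.support.Disjoint p3.support ∧
      p2.support.Disjoint p3.support ∧
      ∀ w : Fin 2 → ZMod 4, w ∈ p1.support ∨ w ∈ p2.support ∨ w ∈ p3.support := by
  rintro ⟨p1, p2, p3, hp1, hp2, hp3, hd12, hd13, hd23, hcov⟩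
  set l1 := p1.support with hl1
  set l2 := p2.support with hl2
  set l3 := p3.support with hl3
  have hn1 : l1.Nodup := hp1.support_nodup
  have hn2 : l2.Nodup := hp2.support_nodup
  have hn3 : l3.Nodup := hp3.support_nodup
  -- the three paths cover all 16 vertices exactly once
  have hnodupL : (l1 ++ l2 ++ l3).Nodup := by
    refine (hn1.append hn2 hd12).append hn3 ?_
    rw [List.disjoint_append_left]
    exact ⟨hd13, hd23⟩
  have hlen : l1.length + l2.length + l3.length = 16 := by
    have huniv : (l1 ++ l2 ++ l3).toFinset = Finset.univ := by
      apply Finset.eq_univ_iff_forall.2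
      intro w
      simp only [List.toFinset_append, Finset.mem_union, List.mem_toFinset]
      rcases hcov w with h | h | h
      · exact Or.inl (Or.inl h)
      · exact Or.inl (Or.inr h)
      · exact Or.inr h
    have hcard := List.toFinset_card_of_nodup hnodupL
    rw [huniv, Finset.card_univ, card16] at hcard
    simp only [List.length_append] at hcard
    omega
  -- encoded supports
  set M1 := l1.map enc with hM1
  set M2 := l2.map enc with hM2
  set M3 := l3.map enc with hM3
  have hchain : ∀ {u v : Fin 2 → ZMod 4} (p : (BH 2).Walk u v),
      (p.support.map enc).Chain' adjN :=
    fun p => List.isChain_map_of_isChain enc (fun a b hab => adj_enc a b hab)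
      p.isChain_adj_support
  have hhead : ∀ {u v : Fin 2 → ZMod 4} (p : (BH 2).Walk u v),
      (p.support.map enc).head? = some (enc u) := by
    intro u v p
    rw [List.head?_map, p.support_eq_cons]
    rfl
  have hlast : ∀ {u v : Fin 2 → ZMod 4} (p : (BH 2).Walk u v),
      (p.support.map enc).getLast? = some (enc v) := by
    intro u v p
    rw [List.getLast?_map, ← List.head?_reverse, ← Walk.support_reverse,
      (p.reverse).support_eq_cons]
    rfl
  have hmemM : ∀ (l : List (Fin 2 → ZMod 4)) (x : Fin 2 → ZMod 4),
      enc x ∈ l.map enc → x ∈ l := by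
    intro l x hx
    rcases List.mem_map.mp hx with ⟨y, hy, hyx⟩
    rwa [← enc_injective hyx]
  have hL1 : M1.length = l1.length := by rw [hM1, List.length_map]
  have hL2 : M2.length = l2.length := by rw [hM2, List.length_map]
  have hL3 : M3.length = l3.length := by rw [hM3, List.length_map]
  have e1 : enc (vtx 1 0) = 1 := by decide
  have e2 : enc (vtx 0 0) = 0 := by decide
  have e3 : enc (vtx 3 0) = 3 := by decide
  have e4 : enc (vtx 2 0) = 2 := by decide
  have e5 : enc (vtx 1 2) = 9 := by decide
  have e6 : enc (vtx 0 1) = 4 := by decide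
  -- the search must succeed
  have hs : searchBH = true := by
    show dfs3 64 0 (maskOf []) ([] : List Nat).length 1 = true
    refine dfs3_complete0 M2 M3
      (hchain p2) (by rw [hM2, hhead p2, e3]) (by rw [hM2, hlast p2, e4])
      (hn2.map enc_injective)
      (hchain p3) (by rw [hM3, hhead p3, e5]) (by rw [hM3, hlast p3, e6])
      (hn3.map enc_injective)
      ?_ 64 M1 [] 1
      (hchain p1) (by rw [hM1, hhead p1, e1]) (by rw [hM1, hlast p1, e2])
      (hn1.map enc_injective)
      (by simp)
      ?_ ?_ ?_ ?_
    · -- M3 disjoint from M2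
      intro x hx hx'
      rcases List.mem_map.mp hx with ⟨y, hy, rfl⟩
      exact hd23 (hmemM l2 y hx') hy
    · -- M2 disjoint from [] and M1
      intro x hx
      rcases List.mem_map.mp hx with ⟨y, hy, rfl⟩
      refine ⟨by simp, fun h => hd12 (hmemM l1 y h) hy⟩
    · -- M3 disjoint from [] and M1
      intro x hx
      rcases List.mem_map.mp hx with ⟨y, hy, rfl⟩
      refine ⟨by simp, fun h => hd13 (hmemM l1 y h) hy⟩
    · rw [hL1, hL2, hL3]; omega
    · rw [hL1, hL2, hL3]; simp; omega
  rw [searchBH_eq_false] at hs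
  exact Bool.false_ne_true hs
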